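/- Let w = s_{π(1)} ⋯ s_{π(n-1)} be a product of all standard Coxeter generators of S_n in some order. Then either w(1) = 2 or w(2) = 1. -/

import Mathlib

private lemma fix_prod {α : Type*} [DecidableEq α] (L : List (Equiv.Perm α)) (x : α)
    (h : ∀ g ∈ L, g x = x) : L.prod x = x := by
  induction L with
  | nil => simp
  | cons a t ih =>
    simp only [List.prod_cons, Equiv.Perm.mul_apply]
    rw [ih (fun g hg => h g (List.mem_cons_of_mem _ hg)), h a (List.mem_cons_self)]

private lemma swap_fix0 {n : ℕ} (i : Fin n) (h : i.val ≠ 0) :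
    Equiv.swap (i.castSucc : Fin (n + 1)) i.succ 0 = 0 := by
  apply Equiv.swap_apply_of_ne_of_ne
  · intro h'; have := congrArg Fin.val h'; simp at this; omega
  · intro h'; have := congrArg Fin.val h'; simp [Fin.val_succ] at this

private lemma swap_fix1 {n : ℕ} (hn : 2 ≤ n) (i : Fin n) (h0 : i.val ≠ 0) (h1 : i.val ≠ 1) :
    Equiv.swap (i.castSucc : Fin (n + 1)) i.succ 1 = 1 := by
  have hone : ((1 : Fin (n+1)) : ℕ) = 1 := by
    rw [Fin.val_one']; exact Nat.mod_eq_of_lt (by omega)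
  apply Equiv.swap_apply_of_ne_of_ne
  · intro h'; have := congrArg Fin.val h'; rw [hone, Fin.coe_castSucc] at this; omega
  · intro h'; have := congrArg Fin.val h'; rw [hone, Fin.val_succ] at this; omega

private lemma aux_prod (n : ℕ) (hn : 2 ≤ n) (l1 l2 : List (Fin n))
    (h1 : (⟨1, by omega⟩ : Fin n) ∉ l1) (h0' : (⟨0, by omega⟩ : Fin n) ∉ l1)
    (h0 : (⟨0, by omega⟩ : Fin n) ∉ l2) :
    (((l1 ++ (⟨0, by omega⟩ : Fin n) :: l2).map
      fun i => Equiv.swap (i.castSucc : Fin (n + 1)) i.succ).prod) 0 = 1 := by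
  rw [List.map_append, List.prod_append, List.map_cons, List.prod_cons]
  have hB : ((l2.map fun i => Equiv.swap (i.castSucc : Fin (n + 1)) i.succ).prod) 0 = 0 := by
    apply fix_prod
    intro g hg
    simp only [List.mem_map] at hg
    obtain ⟨i, hi, rfl⟩ := hg
    exact swap_fix0 i (fun h => h0 (by rw [show i = ⟨0, by omega⟩ from Fin.ext h] at hi; exact hi))
  have hs : Equiv.swap ((⟨0, by omega⟩ : Fin n).castSucc : Fin (n + 1))
      (⟨0, by omega⟩ : Fin n).succ 0 = 1 := by
    have e1 : ((⟨0, by omega⟩ : Fin n).castSucc : Fin (n + 1)) = 0 := by ext; simp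
    have e2 : ((⟨0, by omega⟩ : Fin n).succ : Fin (n + 1)) = 1 := by
      ext; rw [Fin.val_succ, Fin.val_one']; exact (Nat.mod_eq_of_lt (by omega)).symm
    rw [e1, e2, Equiv.swap_apply_left]
  simp only [Equiv.Perm.mul_apply, hB, hs]
  apply fix_prod
  intro g hg
  simp only [List.mem_map] at hg
  obtain ⟨i, hi, rfl⟩ := hg
  refine swap_fix1 hn i
    (fun h => h0' (by rw [show i = ⟨0, by omega⟩ from Fin.ext h] at hi; exact hi))
    (fun h => h1 (by rw [show i = ⟨1, by omega⟩ from Fin.ext h] at hi; exact hi))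

/-- Let `w` be the product, in an arbitrary order, of all the standard Coxeter
generators (adjacent transpositions) of the symmetric group on `n + 1 ≥ 3` letters.
Then either `w` sends the first letter to the second, or the second to the first. -/
theorem prod_coxeter_generators_first_letters
    (n : ℕ) (hn : 2 ≤ n) (l : List (Fin n)) (hnd : l.Nodup) (hlen : l.length = n) :
    ((l.map fun i => Equiv.swap (i.castSucc : Fin (n + 1)) i.succ).prod) 0 = 1 ∨
    ((l.map fun i => Equiv.swap (i.castSucc : Fin (n + 1)) i.succ).prod) 1 = 0 := by
  have hmem : ∀ x : Fin n, x ∈ l := by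
    intro x
    have hcard : l.toFinset.card = Fintype.card (Fin n) := by
      rw [List.toFinset_card_of_nodup hnd, hlen, Fintype.card_fin]
    have := Finset.eq_univ_of_card l.toFinset hcard
    rw [← List.mem_toFinset, this]; exact Finset.mem_univ x
  obtain ⟨l1, l2, hsplit⟩ := List.mem_iff_append.mp (hmem ⟨0, by omega⟩)
  rw [hsplit] at hnd ⊢
  rw [List.nodup_append'] at hnd
  have h0l1 : (⟨0, by omega⟩ : Fin n) ∉ l1 :=
    fun h => hnd.2.2 h List.mem_cons_self
  have h0l2 : (⟨0, by omega⟩ : Fin n) ∉ l2 := (List.nodup_cons.mp hnd.2.1).1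
  by_cases h1 : (⟨1, by omega⟩ : Fin n) ∈ l1
  · right
    set f : Fin n → Equiv.Perm (Fin (n+1)) := fun i => Equiv.swap (i.castSucc : Fin (n + 1)) i.succ with hf
    set w := (((l1 ++ (⟨0, by omega⟩ : Fin n) :: l2)).map f).prod with hw
    have hrev : w⁻¹ = (((l2.reverse ++ (⟨0, by omega⟩ : Fin n) :: l1.reverse)).map f).prod := by
      rw [hw, List.prod_inv_reverse]
      have hinv : ∀ L : List (Fin n), (L.map f).map Inv.inv = L.map f := by
        intro L; rw [List.map_map]; apply List.map_congr_left
        intro i _; simp [hf, Equiv.swap_inv]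
      rw [hinv, ← List.map_reverse]
      congr 1
      simp [List.reverse_append]
    have h1l2 : (⟨1, by omega⟩ : Fin n) ∉ l2 :=
      fun h => hnd.2.2 h1 (List.mem_cons_of_mem _ h)
    have key := aux_prod n hn l2.reverse l1.reverse
      (by simpa using h1l2) (by simpa using h0l2) (by simpa using h0l1)
    have h10 : w⁻¹ 0 = 1 := by rw [hrev]; exact key
    calc w 1 = w (w⁻¹ 0) := by rw [h10]
      _ = 0 := Equiv.apply_symm_apply _ _
  · left
    exact aux_prod n hn l1 l2 h1 h0l1 h0l2
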